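/- Let φ : ℝ^n → [−∞,+∞] be a measurable function and E := sub φ ⊆ ℝ^{n+1} its subgraph. Let t_i > 0 with t_i → 0, and suppose the sets E_{t_i} := {x ∈ ℝ^{n+1} : t_i·x ∈ E} converge in L¹_loc(ℝ^{n+1}) to a measurable set C, i.e. ∫_K |χ_{E_{t_i}} − χ_C| dλ → 0 for every compact K ⊆ ℝ^{n+1}. Then C is directed with respect to e_{n+1}. -/

import Mathlib

open MeasureTheory Metric

/-- Approximate density of a set `M` at `x` with respect to radius `ρ`. -/
noncomputable def approxDensity {d : ℕ} (M : Set (EuclideanSpace ℝ (Fin d))) (ρ : ℝ)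
    (x : EuclideanSpace ℝ (Fin d)) : ENNReal :=
  volume (M ∩ ball x ρ) / volume (ball x ρ)

/-- `M` is directed with respect to `v`. -/
def DirectedWrt {d : ℕ} (M : Set (EuclideanSpace ℝ (Fin d)))
    (v : EuclideanSpace ℝ (Fin d)) : Prop :=
  ∀ x : EuclideanSpace ℝ (Fin d), ∀ ρ : ℝ, 0 < ρ →
    Antitone (fun t : ℝ => approxDensity M ρ (x + t • v))

/-- Measure-theoretic interior. -/
def mInterior {d : ℕ} (M : Set (EuclideanSpace ℝ (Fin d))) :
    Set (EuclideanSpace ℝ (Fin d)) :=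
  {x | ∃ ρ > (0 : ℝ), volume (ball x ρ \ M) = 0}

/-- Measure-theoretic exterior. -/
def mExterior {d : ℕ} (M : Set (EuclideanSpace ℝ (Fin d))) :
    Set (EuclideanSpace ℝ (Fin d)) :=
  {x | ∃ ρ > (0 : ℝ), volume (M ∩ ball x ρ) = 0}

/-- Measure-theoretic boundary. -/
def mBoundary {d : ℕ} (M : Set (EuclideanSpace ℝ (Fin d))) :
    Set (EuclideanSpace ℝ (Fin d)) :=
  (mInterior M ∪ mExterior M)ᶜ

/-- The subgraph of an extended-real-valued function on `ℝⁿ`, as a subset of `ℝⁿ⁺¹`.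
The first `n` coordinates are the base point, the last coordinate is the height. -/
def subgraph {n : ℕ} (φ : EuclideanSpace ℝ (Fin n) → EReal) :
    Set (EuclideanSpace ℝ (Fin (n + 1))) :=
  {x | (x (Fin.last n) : EReal) < φ (WithLp.toLp 2 (fun i : Fin n => x i.castSucc))}

/-- `L¹_loc` convergence of a sequence of sets to a set, via characteristic functions. -/
def L1locConvergesTo {d : ℕ} (A : ℕ → Set (EuclideanSpace ℝ (Fin d)))
    (C : Set (EuclideanSpace ℝ (Fin d))) : Prop :=
  ∀ K : Set (EuclideanSpace ℝ (Fin d)), IsCompact K →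
    Filter.Tendsto
      (fun i => ∫ y in K,
        |Set.indicator (A i) (fun _ => (1 : ℝ)) y - Set.indicator C (fun _ => (1 : ℝ)) y|)
      Filter.atTop (nhds 0)

theorem blowup_of_subgraph_is_directed {n : ℕ}
    (φ : EuclideanSpace ℝ (Fin n) → EReal) (hφ : Measurable φ)
    (t : ℕ → ℝ) (ht : ∀ i, 0 < t i)
    (htlim : Filter.Tendsto t Filter.atTop (nhds 0))
    (C : Set (EuclideanSpace ℝ (Fin (n + 1)))) (hC : MeasurableSet C)
    (hconv : L1locConvergesTo (fun i => {x | t i • x ∈ subgraph φ}) C) :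
    DirectedWrt C (EuclideanSpace.single (Fin.last n) 1) := by
  classical
  set e : EuclideanSpace ℝ (Fin (n + 1)) := EuclideanSpace.single (Fin.last n) 1 with he
  set A : ℕ → Set (EuclideanSpace ℝ (Fin (n + 1))) := fun i => {x | t i • x ∈ subgraph φ}
    with hAdef
  -- coordinates of `e`
  have he_last : e (Fin.last n) = 1 := by
    simp [he, EuclideanSpace.single_apply]
  have he_cast : ∀ j : Fin n, e j.castSucc = 0 := by
    intro j
    simp [he, EuclideanSpace.single_apply, (Fin.castSucc_lt_last j).ne]
  -- measurability of the subgraph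
  have hsub : MeasurableSet (subgraph φ) := by
    have hlast : Measurable fun x : EuclideanSpace ℝ (Fin (n + 1)) =>
        ((x (Fin.last n) : ℝ) : EReal) := by
      exact (measurable_coe_real_ereal).comp
        ((EuclideanSpace.proj (Fin.last n) : EuclideanSpace ℝ (Fin (n + 1)) →L[ℝ] ℝ).continuous.measurable)
    have hproj : Measurable fun x : EuclideanSpace ℝ (Fin (n + 1)) =>
        (WithLp.toLp 2 (fun i : Fin n => x i.castSucc) : EuclideanSpace ℝ (Fin n)) := by
      exact (PiLp.continuous_toLp 2 _).measurable.comp (measurable_pi_lambda _ fun i => (EuclideanSpace.proj i.castSucc : EuclideanSpace ℝ (Fin (n + 1)) →L[ℝ] ℝ).continuous.measurable)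
    exact measurableSet_lt hlast (hφ.comp hproj)
  have hAmeas : ∀ i, MeasurableSet (A i) := by
    intro i
    have : A i = (fun x : EuclideanSpace ℝ (Fin (n + 1)) => t i • x) ⁻¹' subgraph φ := rfl
    rw [this]
    exact (continuous_const_smul (t i)).measurable hsub
  -- vertical monotonicity of each A i
  have hvert : ∀ i, ∀ s s' : ℝ, s ≤ s' → ∀ y, y + s' • e ∈ A i → y + s • e ∈ A i := by
    intro i s s' hss y hy
    have hcoordc : ∀ (r : ℝ) (j : Fin n), (t i • (y + r • e)) j.castSucc
        = t i * y j.castSucc := by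
      intro r j
      simp [PiLp.smul_apply, PiLp.add_apply, smul_eq_mul, he_cast j]
    have hcoordl : ∀ r : ℝ, (t i • (y + r • e)) (Fin.last n)
        = t i * (y (Fin.last n) + r) := by
      intro r
      simp [PiLp.smul_apply, PiLp.add_apply, smul_eq_mul, he_last, mul_add]
    simp only [hAdef, Set.mem_setOf_eq, subgraph] at hy ⊢
    have harg : (fun j : Fin n => (t i • (y + s • e)) j.castSucc)
        = (fun j : Fin n => (t i • (y + s' • e)) j.castSucc) := by
      funext j; rw [hcoordc, hcoordc]
    rw [harg, hcoordl]
    rw [hcoordl] at hy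
    refine lt_of_le_of_lt ?_ hy
    have : t i * (y (Fin.last n) + s) ≤ t i * (y (Fin.last n) + s') := by
      have := (ht i).le
      nlinarith
    exact_mod_cast this
  -- antitonicity of volumes for each A i
  have hAanti : ∀ i (x : EuclideanSpace ℝ (Fin (n + 1))) (ρ : ℝ), ∀ s s' : ℝ, s ≤ s' →
      volume (A i ∩ ball (x + s' • e) ρ) ≤ volume (A i ∩ ball (x + s • e) ρ) := by
    intro i x ρ s s' hss
    have key : (· + (s' - s) • e) ⁻¹' (A i ∩ ball (x + s' • e) ρ)
        ⊆ A i ∩ ball (x + s • e) ρ := by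
      rintro y ⟨hyA, hyB⟩
      constructor
      · have := hvert i 0 (s' - s) (by linarith) y hyA
        simpa using this
      · rw [mem_ball] at hyB ⊢
        have hveq : y + (s' - s) • e - (x + s' • e) = y - (x + s • e) := by
          rw [sub_smul]; abel
        rw [dist_eq_norm] at hyB ⊢
        rw [hveq] at hyB
        exact hyB
    calc volume (A i ∩ ball (x + s' • e) ρ)
        = volume ((· + (s' - s) • e) ⁻¹' (A i ∩ ball (x + s' • e) ρ)) :=
          (measure_preimage_add_right volume _ _).symm
      _ ≤ volume (A i ∩ ball (x + s • e) ρ) := measure_mono key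
  -- convergence of local volumes
  have hlim : ∀ (y : EuclideanSpace ℝ (Fin (n + 1))) (ρ : ℝ), 0 < ρ →
      Filter.Tendsto (fun i => (volume (A i ∩ ball y ρ)).toReal) Filter.atTop
        (nhds ((volume (C ∩ ball y ρ)).toReal)) := by
    intro y ρ hρ
    have hK := hconv (closedBall y ρ) (isCompact_closedBall y ρ)
    set B := ball y ρ with hB
    set K := closedBall y ρ with hKdef
    have hBK : B ⊆ K := ball_subset_closedBall
    have hKfin : volume K < ⊤ := measure_closedBall_lt_top
    have hInt : ∀ (S : Set (EuclideanSpace ℝ (Fin (n + 1)))), MeasurableSet S →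
        IntegrableOn (S.indicator fun _ => (1 : ℝ)) K := by
      intro S hS
      exact (integrableOn_const hKfin.ne).indicator hS
    have hval : ∀ (S : Set (EuclideanSpace ℝ (Fin (n + 1)))), MeasurableSet S →
        ∫ x in B, S.indicator (fun _ => (1 : ℝ)) x = (volume (S ∩ B)).toReal := by
      intro S hS
      rw [setIntegral_indicator hS, setIntegral_const, smul_eq_mul, mul_one,
        Set.inter_comm, Measure.real]
    rw [tendsto_iff_norm_sub_tendsto_zero]
    refine squeeze_zero (fun i => norm_nonneg _) (fun i => ?_) hK
    set f := (A i).indicator (fun _ => (1 : ℝ)) with hf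
    set g := C.indicator (fun _ => (1 : ℝ)) with hg
    have hfK : IntegrableOn f K := hInt _ (hAmeas i)
    have hgK : IntegrableOn g K := hInt _ hC
    have hfB : IntegrableOn f B := hfK.mono_set hBK
    have hgB : IntegrableOn g B := hgK.mono_set hBK
    have h1 : ∫ x in B, (f x - g x) =
        (volume (A i ∩ B)).toReal - (volume (C ∩ B)).toReal := by
      rw [integral_sub hfB hgB, hval _ (hAmeas i), hval _ hC]
    rw [← h1]
    calc ‖∫ x in B, (f x - g x)‖
        ≤ ∫ x in B, ‖f x - g x‖ := norm_integral_le_integral_norm _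
      _ ≤ ∫ x in K, ‖f x - g x‖ := by
          refine setIntegral_mono_set ((hfK.sub hgK).norm) ?_
            (HasSubset.Subset.eventuallyLE hBK)
          exact Filter.Eventually.of_forall fun x => norm_nonneg _
      _ = ∫ x in K, |f x - g x| := by
          simp [Real.norm_eq_abs]
  -- antitonicity for C
  have hCanti : ∀ (x : EuclideanSpace ℝ (Fin (n + 1))) (ρ : ℝ), 0 < ρ → ∀ s s' : ℝ, s ≤ s' →
      volume (C ∩ ball (x + s' • e) ρ) ≤ volume (C ∩ ball (x + s • e) ρ) := by
    intro x ρ hρ s s' hss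
    have h1 := hlim (x + s' • e) ρ hρ
    have h2 := hlim (x + s • e) ρ hρ
    have hfin : ∀ z : EuclideanSpace ℝ (Fin (n + 1)), volume (C ∩ ball z ρ) ≠ ⊤ :=
      fun z => ((measure_mono Set.inter_subset_right).trans_lt measure_ball_lt_top).ne
    have hAfin : ∀ i (z : EuclideanSpace ℝ (Fin (n + 1))), volume (A i ∩ ball z ρ) ≠ ⊤ :=
      fun i z => ((measure_mono Set.inter_subset_right).trans_lt measure_ball_lt_top).ne
    have hle : (volume (C ∩ ball (x + s' • e) ρ)).toReal
        ≤ (volume (C ∩ ball (x + s • e) ρ)).toReal := by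
      refine le_of_tendsto_of_tendsto' h1 h2 fun i => ?_
      exact ENNReal.toReal_mono (hAfin i _) (hAanti i x ρ s s' hss)
    exact (ENNReal.toReal_le_toReal (hfin _) (hfin _)).1 hle
  -- conclusion
  intro x ρ hρ s s' hss
  simp only [approxDensity]
  have hballs : volume (ball (x + s' • e) ρ) = volume (ball (x + s • e) ρ) := by
    exact (Measure.addHaar_ball_center volume _ ρ).trans
      (Measure.addHaar_ball_center volume _ ρ).symm
  rw [hballs]
  exact ENNReal.div_le_div_right (hCanti x ρ hρ s s' hss) _
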